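/- Let θ₂ : π → W be a 2-truncated expansion and let φ ∈ Aut(π) satisfy (|φ| ⊗ |φ|)(I₂) ⊆ I₂. Then the map π → W defined by g ↦ θ₂(g) − |φ|_W(θ₂(φ⁻¹(g))) is a group homomorphism into the additive group of W, and there exists a unique ℝ-linear map τ₁^θ(φ) : H → W such that τ₁^θ(φ)([g]) = θ₂(g) − |φ|_W(θ₂(φ⁻¹(g))) for all g ∈ π. (Well-definedness of the first Johnson map of the paper's Section 2.3.) -/

import Mathlib

open scoped TensorProduct

/-- `H := ℝ ⊗_ℤ π^ab`. -/
abbrev HH (π : Type*) [Group π] := TensorProduct ℤ ℝ (Additive (Abelianization π))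

/-- `[g] := 1 ⊗ (class of g) ∈ H`. -/
noncomputable def cl {π : Type*} [Group π] (g : π) : HH π :=
  (1 : ℝ) ⊗ₜ[ℤ] (Additive.ofMul (Abelianization.of g))

/-- `|φ| : H → H`, the `ℝ`-linear map induced by `φ ∈ Aut(π)`. -/
noncomputable def indH {π : Type*} [Group π] (φ : MulAut π) : HH π →ₗ[ℝ] HH π :=
  LinearMap.baseChange ℝ
    ((MonoidHom.toAdditive (Abelianization.map φ.toMonoidHom)).toIntLinearMap)

/-- `|φ|_W : W → W`, the map induced by `|φ| ⊗ |φ|` on `W = (H ⊗_ℝ H) ⧸ I₂`, given that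
`(|φ| ⊗ |φ|)(I₂) ⊆ I₂`. -/
noncomputable def indW {π : Type*} [Group π] (I₂ : Submodule ℝ (HH π ⊗[ℝ] HH π))
    (φ : MulAut π)
    (hφ : Submodule.map (TensorProduct.map (indH φ) (indH φ)) I₂ ≤ I₂) :
    ((HH π ⊗[ℝ] HH π) ⧸ I₂) →ₗ[ℝ] ((HH π ⊗[ℝ] HH π) ⧸ I₂) :=
  Submodule.mapQ I₂ I₂ (TensorProduct.map (indH φ) (indH φ))
    (Submodule.map_le_iff_le_comap.mp hφ)

/-- Let `θ₂ : π → W` be a 2-truncated expansion and `φ ∈ Aut(π)` with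
`(|φ| ⊗ |φ|)(I₂) ⊆ I₂`.  Then `g ↦ θ₂ g − |φ|_W (θ₂ (φ⁻¹ g))` is a group homomorphism into
the additive group of `W`, and there is a unique `ℝ`-linear map `τ₁^θ(φ) : H → W` with
`τ₁^θ(φ) [g] = θ₂ g − |φ|_W (θ₂ (φ⁻¹ g))` for all `g ∈ π`. -/
lemma indH_cl {π : Type*} [Group π] (φ : MulAut π) (g : π) :
    indH φ (cl g) = cl (φ g) := by
  simp [indH, cl, LinearMap.baseChange_tmul]

lemma cl_one {π : Type*} [Group π] : cl (1 : π) = 0 := by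
  simp [cl]

lemma abel_surj {π : Type*} [Group π] (x : Additive (Abelianization π)) :
    ∃ g : π, Additive.ofMul (Abelianization.of g) = x := by
  obtain ⟨g, hg⟩ := QuotientGroup.mk'_surjective (commutator π) (Additive.toMul x)
  exact ⟨g, congrArg Additive.ofMul hg⟩

theorem statement8 {π : Type*} [Group π] (I₂ : Submodule ℝ (HH π ⊗[ℝ] HH π))
    (θ₂ : π → (HH π ⊗[ℝ] HH π) ⧸ I₂)
    (hθ : ∀ g h : π, θ₂ (g * h) = θ₂ g + θ₂ h + I₂.mkQ (cl g ⊗ₜ[ℝ] cl h))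
    (φ : MulAut π)
    (hφ : Submodule.map (TensorProduct.map (indH φ) (indH φ)) I₂ ≤ I₂) :
    (∀ g h : π,
      θ₂ (g * h) - indW I₂ φ hφ (θ₂ (φ⁻¹ (g * h))) =
        (θ₂ g - indW I₂ φ hφ (θ₂ (φ⁻¹ g))) + (θ₂ h - indW I₂ φ hφ (θ₂ (φ⁻¹ h)))) ∧
    (∃! τ : HH π →ₗ[ℝ] ((HH π ⊗[ℝ] HH π) ⧸ I₂),
      ∀ g : π, τ (cl g) = θ₂ g - indW I₂ φ hφ (θ₂ (φ⁻¹ g))) := by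
  have key : ∀ g h : π,
      indW I₂ φ hφ (I₂.mkQ (cl (φ⁻¹ g) ⊗ₜ[ℝ] cl (φ⁻¹ h))) = I₂.mkQ (cl g ⊗ₜ[ℝ] cl h) := by
    intro g h
    simp [indW, Submodule.mapQ_apply, TensorProduct.map_tmul, indH_cl]
  have hadd : ∀ g h : π,
      θ₂ (g * h) - indW I₂ φ hφ (θ₂ (φ⁻¹ (g * h))) =
        (θ₂ g - indW I₂ φ hφ (θ₂ (φ⁻¹ g))) + (θ₂ h - indW I₂ φ hφ (θ₂ (φ⁻¹ h))) := by
    intro g h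
    have h1 : (φ⁻¹ : MulAut π) (g * h) = φ⁻¹ g * φ⁻¹ h := map_mul _ _ _
    rw [hθ g h, h1, hθ (φ⁻¹ g) (φ⁻¹ h), map_add, map_add, key]
    abel
  refine ⟨hadd, ?_⟩
  -- the homomorphism into Multiplicative W
  have h1 : θ₂ (1 : π) = 0 := by
    have := hθ 1 1
    rw [cl_one] at this
    simpa using this
  have hone : θ₂ 1 - indW I₂ φ hφ (θ₂ (φ⁻¹ (1 : π))) = 0 := by
    simp [h1]
  set f : π → ((HH π ⊗[ℝ] HH π) ⧸ I₂) := fun g => θ₂ g - indW I₂ φ hφ (θ₂ (φ⁻¹ g)) with hf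
  let F : π →* Multiplicative ((HH π ⊗[ℝ] HH π) ⧸ I₂) :=
    { toFun := fun g => Multiplicative.ofAdd (f g)
      map_one' := by simpa [f] using congrArg Multiplicative.ofAdd hone
      map_mul' := fun g h => by
        simpa [f] using congrArg Multiplicative.ofAdd (hadd g h) }
  let F' : Additive (Abelianization π) →+ ((HH π ⊗[ℝ] HH π) ⧸ I₂) :=
    MonoidHom.toAdditiveLeft (Abelianization.lift F)
  let τ : HH π →ₗ[ℝ] ((HH π ⊗[ℝ] HH π) ⧸ I₂) := LinearMap.liftBaseChange ℝ F'.toIntLinearMap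
  have hτ : ∀ g : π, τ (cl g) = f g := by
    intro g
    simp [τ, cl, F', F, f]
  have huniq : ∀ τ₁ τ₂ : HH π →ₗ[ℝ] ((HH π ⊗[ℝ] HH π) ⧸ I₂),
      (∀ g, τ₁ (cl g) = f g) → (∀ g, τ₂ (cl g) = f g) → τ₁ = τ₂ := by
    intro τ₁ τ₂ h1 h2
    apply LinearMap.ext
    intro x
    induction x using TensorProduct.induction_on with
    | zero => simp
    | add a b ha hb => simp [map_add, ha, hb]
    | tmul a x =>
        obtain ⟨g, rfl⟩ := abel_surj x
        have e : a ⊗ₜ[ℤ] (Additive.ofMul (Abelianization.of g)) = a • cl g := by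
          simp [cl, TensorProduct.smul_tmul']
        rw [e, map_smul, map_smul, h1, h2]
  exact ⟨τ, fun g => hτ g, fun τ' h' => huniq τ' τ h' hτ⟩
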